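/- Let 0 < r < p < 1 and let E[n] be the sum of n i.i.d. Bernoulli(p) random variables. Then -lim_{n→∞} (1/n) log P(E[n] ≤ ⌈rn⌉ - 1) = D(r‖p), where D(r‖p) = r log(r/p) + (1-r) log((1-r)/(1-p)). -/

import Mathlib

open Filter Real Finset


namespace Stmt1Aux

noncomputable def T (x : ℝ) (n j : ℕ) : ℝ := (n.choose j : ℝ) * x ^ j * (1 - x) ^ (n - j)

lemma T_nonneg {x : ℝ} (hx0 : 0 ≤ x) (hx1 : x ≤ 1) (n j : ℕ) : 0 ≤ T x n j := by
  have h : (0:ℝ) ≤ 1 - x := by linarith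
  exact mul_nonneg (mul_nonneg (Nat.cast_nonneg _) (pow_nonneg hx0 _)) (pow_nonneg h _)

lemma T_sum (x : ℝ) (n : ℕ) : ∑ j ∈ range (n+1), T x n j = 1 := by
  have h := add_pow x (1 - x) n
  simp only [add_sub_cancel, one_pow] at h
  conv_rhs => rw [h]
  exact Finset.sum_congr rfl fun j _ => by unfold T; ring

lemma T_succ_mul (x : ℝ) {n j : ℕ} (hj : j < n) :
    T x n (j+1) * ((1-x)*(j+1)) = T x n j * (x * ((n:ℝ) - j)) := by
  have h1 : (n.choose (j+1) : ℝ) * (j+1) = (n.choose j : ℝ) * ((n:ℝ) - j) := by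
    have := Nat.choose_succ_right_eq n j
    have h2 : ((n - j : ℕ) : ℝ) = (n:ℝ) - j := by
      rw [Nat.cast_sub hj.le]
    calc (n.choose (j+1) : ℝ) * (j+1) = ((n.choose (j+1) * (j+1) : ℕ) : ℝ) := by push_cast; ring
    _ = ((n.choose j * (n - j) : ℕ) : ℝ) := by rw [this]
    _ = (n.choose j : ℝ) * ((n:ℝ) - j) := by push_cast [h2]; ring
  have h2 : (1 - x) ^ (n - j) = (1 - x) ^ (n - (j+1)) * (1 - x) := by
    rw [← pow_succ]; congr 1; omega
  unfold T
  rw [h2]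
  linear_combination (x^(j+1) * (1 - x)^(n-(j+1)) * (1-x)) * h1

lemma T_le_succ {x : ℝ} (hx1 : x < 1) (hx0 : 0 ≤ x) {n j : ℕ} (hj : j < n)
    (hcond : (1-x)*((j:ℝ)+1) ≤ x*((n:ℝ) - j)) : T x n j ≤ T x n (j+1) := by
  have hA : (0:ℝ) < (1-x)*((j:ℝ)+1) := by
    have : (0:ℝ) < 1 - x := by linarith
    positivity
  have key := T_succ_mul x hj
  have hT : 0 ≤ T x n j := T_nonneg hx0 hx1.le n j
  nlinarith [mul_le_mul_of_nonneg_left hcond hT]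

lemma T_succ_le {x : ℝ} (hx1 : x < 1) (hx0 : 0 ≤ x) {n j : ℕ} (hj : j < n)
    (hcond : x*((n:ℝ) - j) ≤ (1-x)*((j:ℝ)+1)) : T x n (j+1) ≤ T x n j := by
  have hA : (0:ℝ) < (1-x)*((j:ℝ)+1) := by
    have : (0:ℝ) < 1 - x := by linarith
    positivity
  have key := T_succ_mul x hj
  have hT : 0 ≤ T x n j := T_nonneg hx0 hx1.le n j
  nlinarith [mul_le_mul_of_nonneg_left hcond hT]

end Stmt1Aux

namespace Stmt1Aux

lemma T_zero_of_gt {x : ℝ} {n j : ℕ} (h : n < j) : T x n j = 0 := by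
  unfold T; rw [Nat.choose_eq_zero_of_lt h]; simp

lemma T_le_of_le {x : ℝ} (hx0 : 0 ≤ x) (hx1 : x < 1) {n k : ℕ} (hkn : k < n)
    (hcond : ∀ i : ℕ, i < k → (1-x)*((i:ℝ)+1) ≤ x*((n:ℝ)-i)) :
    ∀ j, j ≤ k → T x n j ≤ T x n k := by
  intro j hj
  have hmono : Monotone (fun i => T x n (min i k)) := by
    apply monotone_nat_of_le_succ
    intro i
    rcases lt_or_ge i k with hik | hik
    · have h1 : min i k = i := min_eq_left hik.le
      have h2 : min (i+1) k = i + 1 := min_eq_left hik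
      rw [h1, h2]
      exact T_le_succ hx1 hx0 (hik.trans hkn) (hcond i hik)
    · have h1 : min i k = k := min_eq_right hik
      have h2 : min (i+1) k = k := min_eq_right (hik.trans (Nat.le_succ i))
      rw [h1, h2]
  have := hmono hj
  simpa [min_eq_left hj, min_self] using this

lemma T_le_of_ge {x : ℝ} (hx0 : 0 ≤ x) (hx1 : x < 1) {n k : ℕ}
    (hcond : ∀ i : ℕ, k ≤ i → i < n → x*((n:ℝ)-i) ≤ (1-x)*((i:ℝ)+1)) :
    ∀ j, k ≤ j → T x n j ≤ T x n k := by
  intro j hj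
  have hanti : Antitone (fun i => T x n (max i k)) := by
    apply antitone_nat_of_succ_le
    intro i
    rcases lt_or_ge i k with hik | hik
    · have h1 : max i k = k := max_eq_right hik.le
      have h2 : max (i+1) k = k := max_eq_right hik
      rw [h1, h2]
    · have h1 : max i k = i := max_eq_left hik
      have h2 : max (i+1) k = i + 1 := max_eq_left (hik.trans (Nat.le_succ i))
      rw [h1, h2]
      rcases lt_or_ge i n with hin | hin
      · exact T_succ_le hx1 hx0 hin (hcond i hik hin)
      · rw [T_zero_of_gt (by omega)]
        exact T_nonneg hx0 hx1.le n i
  have := hanti hj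
  simpa [max_eq_left hj, max_self] using this

lemma T_le_one {x : ℝ} (hx0 : 0 ≤ x) (hx1 : x ≤ 1) {n j : ℕ} (hj : j ≤ n) :
    T x n j ≤ 1 := by
  rw [← T_sum x n]
  exact Finset.single_le_sum (fun i _ => T_nonneg hx0 hx1 n i)
    (Finset.mem_range.mpr (by omega))

lemma one_le_max_term {n k : ℕ} (hkn : k < n) :
    1 ≤ ((n:ℝ)+1) * T ((k:ℝ)/n) n k := by
  have hn : (0:ℝ) < n := by
    have : 0 < n := by omega
    exact_mod_cast this
  set x : ℝ := (k:ℝ)/n with hxdef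
  have hkR : (k:ℝ) ≤ n := by exact_mod_cast hkn.le
  have hx0 : 0 ≤ x := by positivity
  have hx1 : x < 1 := by
    rw [hxdef, div_lt_one hn]
    exact_mod_cast hkn
  have hmax : ∀ j, j ∈ Finset.range (n+1) → T x n j ≤ T x n k := by
    intro j _
    rcases le_or_gt j k with hj | hj
    · refine T_le_of_le hx0 hx1 hkn ?_ j hj
      intro i hik
      have hiR : (i:ℝ) + 1 ≤ k := by exact_mod_cast hik
      have key : ((n:ℝ)-k)*((i:ℝ)+1) ≤ (k:ℝ)*((n:ℝ)-i) := by nlinarith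
      calc (1 - x)*((i:ℝ)+1) = (((n:ℝ)-k)*((i:ℝ)+1))/n := by
            rw [hxdef]; field_simp
        _ ≤ ((k:ℝ)*((n:ℝ)-i))/n := by gcongr
        _ = x*((n:ℝ)-i) := by rw [hxdef]; ring
    · refine T_le_of_ge hx0 hx1 ?_ j hj.le
      intro i hik hin
      have hiR : (k:ℝ) ≤ i := by exact_mod_cast hik
      have hinR : (i:ℝ) + 1 ≤ n := by exact_mod_cast hin
      have key : (k:ℝ)*((n:ℝ)-i) ≤ ((n:ℝ)-k)*((i:ℝ)+1) := by nlinarith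
      calc x*((n:ℝ)-i) = ((k:ℝ)*((n:ℝ)-i))/n := by rw [hxdef]; ring
        _ ≤ (((n:ℝ)-k)*((i:ℝ)+1))/n := by gcongr
        _ = (1 - x)*((i:ℝ)+1) := by rw [hxdef]; field_simp
  calc (1:ℝ) = ∑ j ∈ Finset.range (n+1), T x n j := (T_sum x n).symm
    _ ≤ ∑ _j ∈ Finset.range (n+1), T x n k := Finset.sum_le_sum hmax
    _ = ((n:ℝ)+1) * T x n k := by
        rw [Finset.sum_const, Finset.card_range]; push_cast; ring

end Stmt1Aux

namespace Stmt1Aux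

noncomputable def D (p x : ℝ) : ℝ := x * Real.log (x/p) + (1-x) * Real.log ((1-x)/(1-p))

lemma exp_neg_nD {p : ℝ} (hp0 : 0 < p) (hp1 : p < 1) {n k : ℕ} (hk0 : 0 < k) (hkn : k < n) :
    Real.exp (-((n:ℝ) * D p ((k:ℝ)/n))) =
      (p^k * (1-p)^(n-k)) / (((k:ℝ)/n)^k * (1-(k:ℝ)/n)^(n-k)) := by
  have hn : (0:ℝ) < n := by exact_mod_cast (by omega : 0 < n)
  set x : ℝ := (k:ℝ)/n with hxdef
  have hx0 : 0 < x := by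
    have : (0:ℝ) < k := by exact_mod_cast hk0
    positivity
  have hx1 : x < 1 := by
    rw [hxdef, div_lt_one hn]; exact_mod_cast hkn
  have h1x : 0 < 1 - x := by linarith
  have h1p : 0 < 1 - p := by linarith
  have h1 : (n:ℝ) * x = k := by rw [hxdef]; field_simp
  have h2 : (n:ℝ) * (1 - x) = ((n-k : ℕ):ℝ) := by
    rw [Nat.cast_sub hkn.le, hxdef]; field_simp
  have key : -((n:ℝ) * D p x) = (k:ℝ) * Real.log (p/x) + ((n-k:ℕ):ℝ) * Real.log ((1-p)/(1-x)) := by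
    rw [← h1, ← h2]
    unfold D
    rw [Real.log_div hp0.ne' hx0.ne', Real.log_div hx0.ne' hp0.ne',
      Real.log_div h1p.ne' h1x.ne', Real.log_div h1x.ne' h1p.ne']
    ring
  rw [key, Real.exp_add, Real.exp_nat_mul, Real.exp_nat_mul,
    Real.exp_log (by positivity), Real.exp_log (by positivity),
    div_pow, div_pow]
  rw [hxdef]
  have hkk : ((k:ℝ))^k ≠ 0 := by positivity
  have h1xk : ((1:ℝ) - (k:ℝ)/n)^(n-k) ≠ 0 := by
    rw [← hxdef]; positivity
  field_simp
  rw [div_pow, mul_pow, div_pow, div_div_eq_mul_div]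

end Stmt1Aux

section Key
open Stmt1Aux

lemma key_bounds (p r : ℝ) (hr0 : 0 < r) (hrp : r < p) (hp1 : p < 1) (n : ℕ)
    (h1 : 1 < r * n) (h2 : r * n + 1 ≤ n) :
    D p (((⌈r * (n:ℝ)⌉₊ - 1 : ℕ):ℝ)/n) - Real.log ((n:ℝ)+1) / n ≤
      -(Real.log (∑ j ∈ Finset.range ⌈r * (n : ℝ)⌉₊,
          (n.choose j : ℝ) * p ^ j * (1 - p) ^ (n - j)) / n) ∧
    -(Real.log (∑ j ∈ Finset.range ⌈r * (n : ℝ)⌉₊,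
          (n.choose j : ℝ) * p ^ j * (1 - p) ^ (n - j)) / n) ≤
      D p (((⌈r * (n:ℝ)⌉₊ - 1 : ℕ):ℝ)/n) + Real.log ((n:ℝ)+1) / n := by
  have hp0 : 0 < p := hr0.trans hrp
  have hnn : 0 < n := by
    rcases Nat.eq_zero_or_pos n with h | h
    · subst h; simp at h1; linarith
    · exact h
  have hn : (0:ℝ) < n := by exact_mod_cast hnn
  set m := ⌈r * (n:ℝ)⌉₊ with hm
  have hmlb : r * n ≤ m := Nat.le_ceil _
  have hmub : (m:ℝ) < r * n + 1 := Nat.ceil_lt_add_one (by positivity)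
  have hm2 : 2 ≤ m := by
    have h1m : (1:ℝ) < m := h1.trans_le hmlb
    have : 1 < m := by exact_mod_cast h1m
    omega
  set k := m - 1 with hk
  have hkcast : (k:ℝ) = (m:ℝ) - 1 := by
    rw [hk, Nat.cast_sub (by omega)]; simp
  have hk0 : 0 < k := by omega
  have hkub : (k:ℝ) < r * n := by rw [hkcast]; linarith
  have hkn : k < n := by
    have : (k:ℝ) < n := by linarith
    exact_mod_cast this
  set x : ℝ := (k:ℝ)/n with hxdef
  set S : ℝ := ∑ j ∈ Finset.range m, T p n j with hS
  have hSeq : S = ∑ j ∈ Finset.range m, (n.choose j : ℝ) * p ^ j * (1 - p) ^ (n - j) := rfl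
  set E : ℝ := Real.exp (-((n:ℝ) * D p x)) with hE
  -- T p n k is positive
  have hTpos : 0 < T p n k := by
    unfold T
    have := Nat.choose_pos hkn.le
    have h1p : (0:ℝ) < 1 - p := by linarith
    positivity
  -- lower bound on S
  have hTS : T p n k ≤ S :=
    Finset.single_le_sum (fun i _ => T_nonneg hp0.le hp1.le n i)
      (Finset.mem_range.mpr (by omega))
  -- upper bound on S
  have hST : S ≤ ((n:ℝ)+1) * T p n k := by
    have hjk : ∀ j ∈ Finset.range m, T p n j ≤ T p n k := by
      intro j hj
      have hjle : j ≤ k := by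
        have := Finset.mem_range.mp hj; omega
      refine T_le_of_le hp0.le hp1 hkn ?_ j hjle
      intro i hik
      have hiR : (i:ℝ) + 1 ≤ k := by exact_mod_cast hik
      have hrn : r * n ≤ p * n := by nlinarith
      nlinarith [mul_nonneg hp0.le (Nat.cast_nonneg i : (0:ℝ) ≤ i)]
    calc S ≤ ∑ _j ∈ Finset.range m, T p n k := Finset.sum_le_sum hjk
      _ = (m:ℝ) * T p n k := by rw [Finset.sum_const, Finset.card_range, nsmul_eq_mul]
      _ ≤ ((n:ℝ)+1) * T p n k := by
          have : (m:ℝ) ≤ (n:ℝ)+1 := by linarith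
          exact mul_le_mul_of_nonneg_right this hTpos.le
  -- relation to E
  have hEeq := exp_neg_nD hp0 hp1 hk0 hkn
  have hx0 : 0 < x := by
    have : (0:ℝ) < k := by exact_mod_cast hk0
    rw [hxdef]; positivity
  have hx1 : x < 1 := by rw [hxdef, div_lt_one hn]; exact_mod_cast hkn
  have ha : (0:ℝ) < x^k * (1-x)^(n-k) := by
    have : (0:ℝ) < 1 - x := by linarith
    positivity
  have hb : (0:ℝ) < p^k * (1-p)^(n-k) := by
    have : (0:ℝ) < 1 - p := by linarith
    positivity
  have hTE : T p n k ≤ E := by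
    rw [hE, hEeq, ← hxdef, le_div_iff₀ ha]
    calc T p n k * (x^k * (1-x)^(n-k)) = T x n k * (p^k * (1-p)^(n-k)) := by
          unfold T; ring
      _ ≤ 1 * (p^k * (1-p)^(n-k)) :=
          mul_le_mul_of_nonneg_right (T_le_one hx0.le hx1.le hkn.le) hb.le
      _ = p^k * (1-p)^(n-k) := one_mul _
  have hET : E / ((n:ℝ)+1) ≤ T p n k := by
    rw [hE, hEeq, ← hxdef, div_div, div_le_iff₀ (by positivity)]
    calc p^k * (1-p)^(n-k) = 1 * (p^k * (1-p)^(n-k)) := (one_mul _).symm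
      _ ≤ (((n:ℝ)+1) * T x n k) * (p^k * (1-p)^(n-k)) :=
          mul_le_mul_of_nonneg_right (one_le_max_term hkn) hb.le
      _ = T p n k * (x^k * (1-x)^(n-k) * ((n:ℝ)+1)) := by unfold T; ring
  -- combine
  have hSpos : 0 < S := lt_of_lt_of_le hTpos hTS
  have hEpos : 0 < E := Real.exp_pos _
  have hlogub : Real.log S ≤ Real.log ((n:ℝ)+1) + (-((n:ℝ) * D p x)) := by
    calc Real.log S ≤ Real.log (((n:ℝ)+1) * E) := by
          apply Real.log_le_log hSpos
          exact hST.trans (mul_le_mul_of_nonneg_left hTE (by positivity))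
      _ = Real.log ((n:ℝ)+1) + (-((n:ℝ) * D p x)) := by
          rw [Real.log_mul (by positivity) hEpos.ne', hE, Real.log_exp]
  have hloglb : -((n:ℝ) * D p x) - Real.log ((n:ℝ)+1) ≤ Real.log S := by
    calc -((n:ℝ) * D p x) - Real.log ((n:ℝ)+1) = Real.log (E / ((n:ℝ)+1)) := by
          rw [Real.log_div hEpos.ne' (by positivity), hE, Real.log_exp]
      _ ≤ Real.log S := Real.log_le_log (by positivity) (hET.trans hTS)
  rw [← hSeq]
  have e1 : (Real.log ((n:ℝ)+1) + -((n:ℝ) * D p x))/(n:ℝ)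
      = Real.log ((n:ℝ)+1)/n - D p x := by
    rw [add_div, neg_div, mul_div_cancel_left₀ _ hn.ne']
    ring
  have e2 : (-((n:ℝ) * D p x) - Real.log ((n:ℝ)+1))/(n:ℝ)
      = -(D p x) - Real.log ((n:ℝ)+1)/n := by
    rw [sub_div, neg_div, mul_div_cancel_left₀ _ hn.ne']
  constructor
  · have h' := (div_le_div_iff_of_pos_right hn).mpr hlogub
    rw [e1] at h'
    linarith
  · have h' := (div_le_div_iff_of_pos_right hn).mpr hloglb
    rw [e2] at h'
    linarith

end Key

section Main
open Stmt1Aux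

lemma log_succ_div_tendsto : Tendsto (fun n : ℕ => Real.log ((n:ℝ)+1) / n) atTop (nhds 0) := by
  have base : Tendsto (fun x : ℝ => Real.log x / x) atTop (nhds 0) := by
    have := Real.tendsto_pow_log_div_mul_add_atTop 1 0 1 one_ne_zero
    simpa using this
  have hcomp : Tendsto (fun n : ℕ => Real.log ((n:ℝ)+1) / ((n:ℝ)+1)) atTop (nhds 0) :=
    base.comp (tendsto_atTop_add_const_right atTop 1 tendsto_natCast_atTop_atTop)
  have hratio : Tendsto (fun n : ℕ => ((n:ℝ)+1)/n) atTop (nhds 1) := by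
    have h0 : Tendsto (fun n : ℕ => 1 + 1/(n:ℝ)) atTop (nhds 1) := by
      simpa using tendsto_const_nhds.add (tendsto_one_div_atTop_nhds_zero_nat : Tendsto (fun n : ℕ => 1/(n:ℝ)) atTop (nhds 0))
    refine h0.congr' ?_
    filter_upwards [eventually_gt_atTop 0] with n hn
    have hn' : ((n:ℝ)) ≠ 0 := by positivity
    field_simp
  have hmul := hcomp.mul hratio
  rw [zero_mul] at hmul
  refine hmul.congr' ?_
  filter_upwards [eventually_gt_atTop 0] with n hn
  have hn' : ((n:ℝ)) ≠ 0 := by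
    have : (0:ℝ) < n := by exact_mod_cast hn
    exact this.ne'
  field_simp

/-- Large-deviation lower tail of a Binomial(n,p): for `0 < r < p < 1`,
`-lim (1/n) log P(E[n] ≤ ⌈rn⌉ - 1) = D(r‖p)`, where
`P(E[n] ≤ ⌈rn⌉ - 1) = ∑_{k=0}^{⌈rn⌉-1} C(n,k) p^k (1-p)^{n-k}`. -/
theorem stmt1 (p r : ℝ) (hr0 : 0 < r) (hrp : r < p) (hp1 : p < 1) :
    Tendsto (fun n : ℕ =>
        -(Real.log (∑ k ∈ Finset.range ⌈r * (n : ℝ)⌉₊,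
            (n.choose k : ℝ) * p ^ k * (1 - p) ^ (n - k)) / n)) atTop
      (nhds (r * Real.log (r / p) + (1 - r) * Real.log ((1 - r) / (1 - p)))) := by
  have hp0 : 0 < p := hr0.trans hrp
  have hr1 : r < 1 := hrp.trans hp1
  set xseq : ℕ → ℝ := fun n => ((⌈r * (n:ℝ)⌉₊ - 1 : ℕ):ℝ)/n with hxseq
  -- eventual hypotheses
  have hev1 : ∀ᶠ n : ℕ in atTop, 1 < r * n := by
    have : Tendsto (fun n : ℕ => r * n) atTop atTop :=
      (tendsto_natCast_atTop_atTop).const_mul_atTop hr0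
    exact this.eventually_gt_atTop 1
  have hev2 : ∀ᶠ n : ℕ in atTop, r * n + 1 ≤ n := by
    have h : Tendsto (fun n : ℕ => (1-r) * n) atTop atTop :=
      (tendsto_natCast_atTop_atTop).const_mul_atTop (by linarith)
    filter_upwards [h.eventually_ge_atTop 1] with n hn
    nlinarith
  -- xseq tends to r
  have hx : Tendsto xseq atTop (nhds r) := by
    refine tendsto_of_tendsto_of_tendsto_of_le_of_le'
      (g := fun n : ℕ => r - 1/(n:ℝ)) (h := fun _ : ℕ => r) ?_ ?_ ?_ ?_
    · simpa using tendsto_const_nhds.sub (tendsto_one_div_atTop_nhds_zero_nat : Tendsto (fun n : ℕ => 1/(n:ℝ)) atTop (nhds 0))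
    · exact tendsto_const_nhds
    · filter_upwards [hev1] with n h1
      have hn : (0:ℝ) < n := by
        rcases Nat.eq_zero_or_pos n with h | h
        · subst h; simp at h1; linarith
        · exact_mod_cast h
      have hmlb : r * n ≤ ⌈r * (n:ℝ)⌉₊ := Nat.le_ceil _
      have hm1 : 1 ≤ ⌈r * (n:ℝ)⌉₊ := by
        have : (1:ℝ) < ⌈r * (n:ℝ)⌉₊ := h1.trans_le hmlb
        exact_mod_cast this.le
      have hkc : ((⌈r * (n:ℝ)⌉₊ - 1 : ℕ):ℝ) = (⌈r * (n:ℝ)⌉₊:ℝ) - 1 := by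
        rw [Nat.cast_sub hm1]; simp
      show r - 1/(n:ℝ) ≤ ((⌈r * (n:ℝ)⌉₊ - 1 : ℕ):ℝ)/n
      rw [hkc]
      calc r - 1/(n:ℝ) = (r * n - 1)/n := by field_simp
        _ ≤ ((⌈r * (n:ℝ)⌉₊:ℝ) - 1)/n := by gcongr
    · filter_upwards [hev1] with n h1
      have hn : (0:ℝ) < n := by
        rcases Nat.eq_zero_or_pos n with h | h
        · subst h; simp at h1; linarith
        · exact_mod_cast h
      have hmub : (⌈r * (n:ℝ)⌉₊:ℝ) < r * n + 1 :=
        Nat.ceil_lt_add_one (mul_nonneg hr0.le (Nat.cast_nonneg n))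
      have hm1 : 1 ≤ ⌈r * (n:ℝ)⌉₊ := by
        have : (1:ℝ) < ⌈r * (n:ℝ)⌉₊ := h1.trans_le (Nat.le_ceil _)
        exact_mod_cast this.le
      have hkc : ((⌈r * (n:ℝ)⌉₊ - 1 : ℕ):ℝ) = (⌈r * (n:ℝ)⌉₊:ℝ) - 1 := by
        rw [Nat.cast_sub hm1]; simp
      show ((⌈r * (n:ℝ)⌉₊ - 1 : ℕ):ℝ)/n ≤ r
      rw [hkc]
      calc ((⌈r * (n:ℝ)⌉₊:ℝ) - 1)/n ≤ (r * n)/n := by gcongr; linarith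
        _ = r := by field_simp
  -- continuity of D at r
  have hcont : ContinuousAt (D p) r := by
    have h1r : (0:ℝ) < 1 - r := by linarith
    have h1p : (0:ℝ) < 1 - p := by linarith
    have hf1 : ContinuousAt (fun x : ℝ => x/p) r := continuousAt_id.div_const p
    have h1 : ContinuousAt (fun x : ℝ => Real.log (x/p)) r := by
      have := ContinuousAt.comp (g := Real.log) (f := fun x : ℝ => x/p) (x := r)
        (Real.continuousAt_log (by positivity)) hf1
      exact this
    have hf2 : ContinuousAt (fun x : ℝ => (1-x)/(1-p)) r :=
      (continuousAt_const.sub continuousAt_id).div_const (1-p)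
    have h2 : ContinuousAt (fun x : ℝ => Real.log ((1-x)/(1-p))) r := by
      have := ContinuousAt.comp (g := Real.log) (f := fun x : ℝ => (1-x)/(1-p)) (x := r)
        (Real.continuousAt_log (by positivity)) hf2
      exact this
    exact (continuousAt_id.mul h1).add ((continuousAt_const.sub continuousAt_id).mul h2)
  have hD : Tendsto (fun n : ℕ => D p (xseq n)) atTop (nhds (D p r)) :=
    hcont.tendsto.comp hx
  have hlog := log_succ_div_tendsto
  have hDr : D p r = r * Real.log (r / p) + (1 - r) * Real.log ((1 - r) / (1 - p)) := rfl
  rw [← hDr]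
  refine tendsto_of_tendsto_of_tendsto_of_le_of_le'
    (g := fun n : ℕ => D p (xseq n) - Real.log ((n:ℝ)+1)/n)
    (h := fun n : ℕ => D p (xseq n) + Real.log ((n:ℝ)+1)/n) ?_ ?_ ?_ ?_
  · simpa using hD.sub hlog
  · simpa using hD.add hlog
  · filter_upwards [hev1, hev2] with n h1 h2
    exact (key_bounds p r hr0 hrp hp1 n h1 h2).1
  · filter_upwards [hev1, hev2] with n h1 h2
    exact (key_bounds p r hr0 hrp hp1 n h1 h2).2

end Main
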